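/- For h > 0: I_{0,3}(h) = (3/4) h I_{0,1}(h) - (1/2) r^7, where r = sqrt((sqrt(1+4h)-1)/2) and I_{i,j}(h) = 2∫_r^{√h} x^i (h-x^2)^{j/2} dx. -/

import Mathlib

open Real intervalIntegral

theorem stmt_5 (h : ℝ) (hh : 0 < h)
    (r : ℝ) (hr : r = Real.sqrt ((Real.sqrt (1 + 4 * h) - 1) / 2)) :
    (2 * ∫ x in r..(Real.sqrt h), Real.sqrt (h - x ^ 2) ^ 3) =
      (3 / 4) * h * (2 * ∫ x in r..(Real.sqrt h), Real.sqrt (h - x ^ 2)) -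
        (1 / 2) * r ^ 7 := by
  have h14 : (1:ℝ) ≤ 1 + 4 * h := by linarith
  have hs14 : Real.sqrt (1 + 4 * h) ^ 2 = 1 + 4 * h := Real.sq_sqrt (by linarith)
  have hs1 : 1 < Real.sqrt (1 + 4 * h) := by
    nlinarith [Real.sqrt_nonneg (1 + 4 * h)]
  have harg : 0 < (Real.sqrt (1 + 4 * h) - 1) / 2 := by linarith
  have hrpos : 0 < r := by rw [hr]; exact Real.sqrt_pos.mpr harg
  have hr2 : r ^ 2 = (Real.sqrt (1 + 4 * h) - 1) / 2 := by
    rw [hr]; exact Real.sq_sqrt harg.le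
  have hsum : r ^ 2 + r ^ 4 = h := by nlinarith [hr2, hs14]
  have hr2h : r ^ 2 ≤ h := by nlinarith [pow_pos hrpos 4]
  have hrle : r ≤ Real.sqrt h := by
    rw [show r = Real.sqrt (r ^ 2) by rw [Real.sqrt_sq hrpos.le]]
    exact Real.sqrt_le_sqrt hr2h
  -- derivative fact on the interior
  have hderiv : ∀ x ∈ Set.Ioo r (Real.sqrt h),
      HasDerivAt (fun y => y * Real.sqrt (h - y ^ 2) ^ 3)
        (4 * Real.sqrt (h - x ^ 2) ^ 3 - 3 * h * Real.sqrt (h - x ^ 2)) x := by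
    intro x hx
    have hxpos : 0 < x := lt_trans hrpos hx.1
    have hx2 : x ^ 2 < h := by
      have := hx.2
      nlinarith [Real.sq_sqrt hh.le, Real.sqrt_nonneg h]
    have hs : 0 < h - x ^ 2 := by linarith
    have h1 : HasDerivAt (fun y : ℝ => h - y ^ 2) (-(2 * x)) x := by
      simpa using (hasDerivAt_pow 2 x).const_sub h
    have h2 : HasDerivAt (fun y : ℝ => Real.sqrt (h - y ^ 2))
        (1 / (2 * Real.sqrt (h - x ^ 2)) * (-(2 * x))) x :=
      (Real.hasDerivAt_sqrt (ne_of_gt hs)).comp x h1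
    have h3 : HasDerivAt (fun y : ℝ => Real.sqrt (h - y ^ 2) ^ 3)
        (3 * Real.sqrt (h - x ^ 2) ^ 2 * (1 / (2 * Real.sqrt (h - x ^ 2)) * (-(2 * x)))) x := by
      simpa using h2.fun_pow 3
    have h4 : HasDerivAt (fun y : ℝ => y * Real.sqrt (h - y ^ 2) ^ 3)
        (1 * Real.sqrt (h - x ^ 2) ^ 3 + x * (3 * Real.sqrt (h - x ^ 2) ^ 2 * (1 / (2 * Real.sqrt (h - x ^ 2)) * (-(2 * x))))) x :=
      (hasDerivAt_id x).fun_mul h3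
    convert h4 using 1
    have hsq : Real.sqrt (h - x ^ 2) ^ 2 = h - x ^ 2 := Real.sq_sqrt hs.le
    have hsp : 0 < Real.sqrt (h - x ^ 2) := Real.sqrt_pos.mpr hs
    field_simp
    nlinarith [hsq, hsp]
  have hcont : ContinuousOn (fun y => y * Real.sqrt (h - y ^ 2) ^ 3)
      (Set.Icc r (Real.sqrt h)) := by
    exact (continuous_id.mul ((Real.continuous_sqrt.comp
      (continuous_const.sub (continuous_pow 2))).pow 3)).continuousOn
  have hcont1 : Continuous fun x : ℝ => Real.sqrt (h - x ^ 2) :=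
    Real.continuous_sqrt.comp (continuous_const.sub (continuous_pow 2))
  have hcont3 : Continuous fun x : ℝ => Real.sqrt (h - x ^ 2) ^ 3 := hcont1.pow 3
  have hint1 : IntervalIntegrable (fun x : ℝ => Real.sqrt (h - x ^ 2)) MeasureTheory.volume r (Real.sqrt h) :=
    hcont1.intervalIntegrable _ _
  have hint3 : IntervalIntegrable (fun x : ℝ => Real.sqrt (h - x ^ 2) ^ 3) MeasureTheory.volume r (Real.sqrt h) :=
    hcont3.intervalIntegrable _ _
  have hintg : IntervalIntegrable
      (fun x : ℝ => 4 * Real.sqrt (h - x ^ 2) ^ 3 - 3 * h * Real.sqrt (h - x ^ 2))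
      MeasureTheory.volume r (Real.sqrt h) := by
    exact ((hint3.const_mul 4).sub (hint1.const_mul (3 * h)))
  have key := intervalIntegral.integral_eq_sub_of_hasDeriv_right_of_le hrle hcont
    (fun x hx => (hderiv x hx).hasDerivWithinAt) hintg
  -- evaluate the endpoints
  have hend : Real.sqrt (h - Real.sqrt h ^ 2) = 0 := by
    rw [Real.sq_sqrt hh.le]; simp
  have hstart : Real.sqrt (h - r ^ 2) = r ^ 2 := by
    have : h - r ^ 2 = (r ^ 2) ^ 2 := by nlinarith [hsum]
    rw [this, Real.sqrt_sq (by positivity)]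
  rw [hend, hstart] at key
  have hsplit : ∫ x in r..(Real.sqrt h),
      (4 * Real.sqrt (h - x ^ 2) ^ 3 - 3 * h * Real.sqrt (h - x ^ 2)) =
      4 * (∫ x in r..(Real.sqrt h), Real.sqrt (h - x ^ 2) ^ 3)
        - 3 * h * (∫ x in r..(Real.sqrt h), Real.sqrt (h - x ^ 2)) := by
    rw [intervalIntegral.integral_sub (hint3.const_mul 4) (hint1.const_mul (3 * h)),
      intervalIntegral.integral_const_mul, intervalIntegral.integral_const_mul]
  rw [hsplit] at key
  nlinarith [key]
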